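/- Let Φ(z) = a₁z + b₁ with |a₁| ≤ 1 and Ψ(z) = a₂z + b₂ with |a₂| ≤ 1, and suppose C_Φ and C_Ψ are bounded on H_E(ξ). Then the product C_Ψ C_Φ is an isometry on H_E(ξ) if and only if |a₁| = 1, |a₂| = 1, and a₁b₂ + b₁ = 0; the same equivalence holds for unitarity. -/

import Mathlib

noncomputable section

open Filter

/-- `n`-th Taylor coefficient of `f` at `0`. -/
def heCoeff (f : ℂ → ℂ) (n : ℕ) : ℂ := iteratedDeriv n f 0 / (n.factorial : ℂ)

/-- Membership in the weighted Hardy space of entire functions `H_E(ξ)`. -/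
def MemHE (ξ : ℕ → ℝ) (f : ℂ → ℂ) : Prop :=
  Differentiable ℂ f ∧ Summable (fun n => ‖heCoeff f n‖ ^ 2 * (ξ n) ^ 2)

/-- Squared norm in `H_E(ξ)`. -/
def heNormSq (ξ : ℕ → ℝ) (f : ℂ → ℂ) : ℝ := ∑' n, ‖heCoeff f n‖ ^ 2 * (ξ n) ^ 2

/-- Inner product in `H_E(ξ)`. -/
def heInner (ξ : ℕ → ℝ) (f g : ℂ → ℂ) : ℂ :=
  ∑' n, heCoeff f n * (starRingEnd ℂ) (heCoeff g n) * ((ξ n : ℂ)) ^ 2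

/-- `ξ` is an admissible weight sequence: positive with `ξ n ^ (1/n) → ∞`. -/
def HEWeight (ξ : ℕ → ℝ) : Prop :=
  (∀ n, 0 < ξ n) ∧ Tendsto (fun n : ℕ => (ξ n) ^ ((1 : ℝ) / n)) atTop atTop

/-- An operator on functions is an isometry of `H_E(ξ)`. -/
def IsIsometryHE (ξ : ℕ → ℝ) (T : (ℂ → ℂ) → (ℂ → ℂ)) : Prop :=
  (∀ f, MemHE ξ f → MemHE ξ (T f)) ∧ ∀ f, MemHE ξ f → heNormSq ξ (T f) = heNormSq ξ f

/-- Unitary: an isometry of `H_E(ξ)` mapping `H_E(ξ)` onto itself. -/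
def IsUnitaryHE (ξ : ℕ → ℝ) (T : (ℂ → ℂ) → (ℂ → ℂ)) : Prop :=
  IsIsometryHE ξ T ∧ ∀ g, MemHE ξ g → ∃ f, MemHE ξ f ∧ T f = g

/-- Composition operator `C_Φ f = f ∘ Φ`. -/
def compOp (Φ : ℂ → ℂ) : (ℂ → ℂ) → (ℂ → ℂ) := fun f => f ∘ Φ

/-- Weighted composition operator `C_{Υ,Φ} f = Υ · (f ∘ Φ)`. -/
def wCompOp (Υ Φ : ℂ → ℂ) : (ℂ → ℂ) → (ℂ → ℂ) := fun f z => Υ z * f (Φ z)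

/-- Reproducing kernel `K_p(z) = ∑ conj(p)^n z^n / ξ_n²`. -/
def heKernel (ξ : ℕ → ℝ) (p : ℂ) : ℂ → ℂ :=
  fun z => ∑' n, (starRingEnd ℂ p) ^ n * z ^ n / ((ξ n : ℂ)) ^ 2

/-- Boundedness of an operator on `H_E(ξ)`. -/
def IsBoundedHE (ξ : ℕ → ℝ) (T : (ℂ → ℂ) → (ℂ → ℂ)) : Prop :=
  ∃ M > (0 : ℝ), ∀ f, MemHE ξ f → MemHE ξ (T f) ∧
    Real.sqrt (heNormSq ξ (T f)) ≤ M * Real.sqrt (heNormSq ξ f)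

/-- Generalized weighted composition operator `D^p_{Φ,Υ} f = Υ · (f^{(p)} ∘ Φ)`. -/
def genWComp (p : ℕ) (Φ Υ : ℂ → ℂ) : (ℂ → ℂ) → (ℂ → ℂ) :=
  fun f z => Υ z * iteratedDeriv p f (Φ z)


lemma iteratedDerivZeroFun (m : ℕ) : iteratedDeriv m (fun _ : ℂ => (0:ℂ)) = fun _ => 0 := by
  induction m with
  | zero => rw [iteratedDeriv_zero]
  | succ n ih =>
    rw [iteratedDeriv_succ', deriv_const']
    exact ih

lemma heCoeff_linear (α β : ℂ) (n : ℕ) :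
    heCoeff (fun z => α * z + β) n = if n = 0 then β else if n = 1 then α else 0 := by
  have hd : deriv (fun z : ℂ => α * z + β) = fun _ => α := by
    funext z
    have h : HasDerivAt (fun z : ℂ => α * z + β) α z := by
      simpa using (((hasDerivAt_id z).const_mul α).add_const β)
    exact h.deriv
  match n with
  | 0 => simp [heCoeff]
  | 1 =>
    rw [heCoeff, iteratedDeriv_succ', hd, iteratedDeriv_zero]
    simp
  | (m+2) =>
    rw [heCoeff, iteratedDeriv_succ', hd, iteratedDeriv_succ', deriv_const',
      iteratedDerivZeroFun]
    simp

lemma memHE_linear (ξ : ℕ → ℝ) (α β : ℂ) : MemHE ξ (fun z => α * z + β) := by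
  constructor
  · exact (differentiable_id.const_mul α).add_const β
  · apply summable_of_ne_finset_zero (s := ({0, 1} : Finset ℕ))
    intro n hn
    simp only [Finset.mem_insert, Finset.mem_singleton, not_or] at hn
    rw [heCoeff_linear, if_neg hn.1, if_neg hn.2]
    simp

lemma heNormSq_linear (ξ : ℕ → ℝ) (α β : ℂ) :
    heNormSq ξ (fun z => α * z + β) = ‖β‖ ^ 2 * (ξ 0) ^ 2 + ‖α‖ ^ 2 * (ξ 1) ^ 2 := by
  rw [heNormSq, tsum_eq_sum (s := ({0, 1} : Finset ℕ)) ?_]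
  · rw [show ({0, 1} : Finset ℕ) = insert 0 {1} from rfl,
      Finset.sum_insert (by norm_num), Finset.sum_singleton]
    rw [heCoeff_linear, heCoeff_linear]
    norm_num
  · intro n hn
    simp only [Finset.mem_insert, Finset.mem_singleton, not_or] at hn
    rw [heCoeff_linear, if_neg hn.1, if_neg hn.2]
    simp

lemma heCoeff_comp_mul (f : ℂ → ℂ) (hf : Differentiable ℂ f) (c : ℂ) (n : ℕ) :
    heCoeff (fun z => f (c * z)) n = c ^ n * heCoeff f n := by
  rw [heCoeff, heCoeff, iteratedDeriv_comp_const_mul hf.contDiff c]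
  simp only [mul_zero]
  ring

set_option maxHeartbeats 1000000 in
/-- For bounded `C_Φ`, `C_Ψ` with `Φ(z) = a₁z + b₁`, `Ψ(z) = a₂z + b₂`,
`|a₁| ≤ 1`, `|a₂| ≤ 1`: the product `C_Ψ C_Φ` is an isometry (resp. unitary)
on `H_E(ξ)` iff `|a₁| = 1`, `|a₂| = 1` and `a₁b₂ + b₁ = 0`. -/
theorem stmt7 (ξ : ℕ → ℝ) (hξ : HEWeight ξ) (a₁ b₁ a₂ b₂ : ℂ)
    (ha₁ : ‖a₁‖ ≤ 1) (ha₂ : ‖a₂‖ ≤ 1)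
    (Φ Ψ : ℂ → ℂ) (hΦ : Φ = fun z => a₁ * z + b₁) (hΨ : Ψ = fun z => a₂ * z + b₂)
    (hbdΦ : IsBoundedHE ξ (compOp Φ)) (hbdΨ : IsBoundedHE ξ (compOp Ψ)) :
    (IsIsometryHE ξ (fun f => compOp Ψ (compOp Φ f)) ↔
      (‖a₁‖ = 1 ∧ ‖a₂‖ = 1 ∧ a₁ * b₂ + b₁ = 0)) ∧
    (IsUnitaryHE ξ (fun f => compOp Ψ (compOp Φ f)) ↔
      (‖a₁‖ = 1 ∧ ‖a₂‖ = 1 ∧ a₁ * b₂ + b₁ = 0)) := by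
  set c : ℂ := a₁ * a₂ with hc
  set d : ℂ := a₁ * b₂ + b₁ with hd
  have hT : ∀ f : ℂ → ℂ, compOp Ψ (compOp Φ f) = fun z => f (c * z + d) := by
    intro f; funext z
    simp only [compOp, Function.comp, hΦ, hΨ]
    congr 1; rw [hc, hd]; ring
  have hiso : (‖a₁‖ = 1 ∧ ‖a₂‖ = 1 ∧ a₁ * b₂ + b₁ = 0) →
      IsUnitaryHE ξ (fun f => compOp Ψ (compOp Φ f)) := by
    rintro ⟨h1, h2, h3⟩
    have hdc : d = 0 := h3
    have hcn : ‖c‖ = 1 := by rw [hc, norm_mul, h1, h2, one_mul]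
    have hc0 : c ≠ 0 := by
      intro h; rw [h, norm_zero] at hcn; norm_num at hcn
    have key : ∀ (e : ℂ), ‖e‖ = 1 → ∀ f, MemHE ξ f →
        MemHE ξ (fun z => f (e * z)) ∧ heNormSq ξ (fun z => f (e * z)) = heNormSq ξ f := by
      intro e he f hfm
      have hfd := hfm.1
      have hfun : (fun n => ‖heCoeff (fun z => f (e * z)) n‖ ^ 2 * (ξ n) ^ 2)
          = fun n => ‖heCoeff f n‖ ^ 2 * (ξ n) ^ 2 := by
        funext n
        rw [heCoeff_comp_mul f hfd e n, norm_mul, norm_pow, he, one_pow, one_mul]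
      refine ⟨⟨hfd.comp (differentiable_id.const_mul e), ?_⟩, ?_⟩
      · rw [hfun]; exact hfm.2
      · rw [heNormSq, heNormSq, hfun]
    have hTd : ∀ f : ℂ → ℂ, compOp Ψ (compOp Φ f) = fun z => f (c * z) := by
      intro f; rw [hT f, hdc]; simp only [add_zero]
    refine ⟨⟨?_, ?_⟩, ?_⟩
    · intro f hf
      show MemHE ξ (compOp Ψ (compOp Φ f))
      rw [hTd f]
      exact (key c hcn f hf).1
    · intro f hf
      show heNormSq ξ (compOp Ψ (compOp Φ f)) = heNormSq ξ f
      rw [hTd f]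
      exact (key c hcn f hf).2
    · intro g hg
      have hci : ‖c⁻¹‖ = 1 := by rw [norm_inv, hcn]; norm_num
      refine ⟨fun z => g (c⁻¹ * z), (key c⁻¹ hci g hg).1, ?_⟩
      show compOp Ψ (compOp Φ fun z => g (c⁻¹ * z)) = g
      rw [hTd]
      funext z
      rw [← mul_assoc, inv_mul_cancel₀ hc0, one_mul]
  have hfwd : IsIsometryHE ξ (fun f => compOp Ψ (compOp Φ f)) →
      (‖a₁‖ = 1 ∧ ‖a₂‖ = 1 ∧ a₁ * b₂ + b₁ = 0) := by
    rintro ⟨hmem, hnorm⟩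
    have hnsq : ∀ z : ℂ, ‖z‖ ^ 2 = z.re * z.re + z.im * z.im := by
      intro z
      rw [Complex.sq_norm, Complex.normSq_apply]
    have E : ∀ β : ℂ, ‖d + β‖ ^ 2 * (ξ 0) ^ 2 + ‖c‖ ^ 2 * (ξ 1) ^ 2
        = ‖β‖ ^ 2 * (ξ 0) ^ 2 + (ξ 1) ^ 2 := by
      intro β
      have h1 : heNormSq ξ (compOp Ψ (compOp Φ (fun z => 1 * z + β)))
          = heNormSq ξ (fun z => 1 * z + β) := hnorm _ (memHE_linear ξ 1 β)
      rw [hT, heNormSq_linear] at h1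
      have h2 : (fun z : ℂ => 1 * (c * z + d) + β) = fun z : ℂ => c * z + (d + β) := by
        funext z; ring
      rw [h2, heNormSq_linear] at h1
      rw [norm_one, one_pow, one_mul] at h1
      linarith
    have hξ0 : 0 < (ξ 0) ^ 2 := pow_pos (hξ.1 0) 2
    have hξ1 : 0 < (ξ 1) ^ 2 := pow_pos (hξ.1 1) 2
    have E0 := E 0
    rw [add_zero, norm_zero] at E0
    have E1 := E 1
    have EI := E Complex.I
    rw [norm_one, one_pow, one_mul] at E1
    rw [Complex.norm_I, one_pow, one_mul] at EI
    have hdre : d.re = 0 := by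
      have hA : ‖d + 1‖ ^ 2 * (ξ 0) ^ 2
          = (‖d‖ ^ 2 + 1) * (ξ 0) ^ 2 := by linarith [E0, E1]
      have hkey := mul_right_cancel₀ (ne_of_gt hξ0) hA
      rw [hnsq (d + 1), hnsq d] at hkey
      simp only [Complex.add_re, Complex.add_im, Complex.one_re, Complex.one_im,
        add_zero] at hkey
      nlinarith [hkey]
    have hdim : d.im = 0 := by
      have hA : ‖d + Complex.I‖ ^ 2 * (ξ 0) ^ 2
          = (‖d‖ ^ 2 + 1) * (ξ 0) ^ 2 := by linarith [E0, EI]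
      have hkey := mul_right_cancel₀ (ne_of_gt hξ0) hA
      rw [hnsq (d + Complex.I), hnsq d] at hkey
      simp only [Complex.add_re, Complex.add_im, Complex.I_re, Complex.I_im,
        add_zero] at hkey
      nlinarith [hkey]
    have hd0 : d = 0 := by
      apply Complex.ext <;> simp [hdre, hdim]
    have hcn : ‖c‖ = 1 := by
      rw [hd0] at E0
      rw [norm_zero] at E0
      have hA : ‖c‖ ^ 2 * (ξ 1) ^ 2 = 1 * (ξ 1) ^ 2 := by linarith [E0]
      have habs := mul_right_cancel₀ (ne_of_gt hξ1) hA
      nlinarith [habs, norm_nonneg c,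
        sq_nonneg (‖c‖ - 1), sq_nonneg (‖c‖ + 1)]
    have hprod : ‖a₁‖ * ‖a₂‖ = 1 := by rw [← norm_mul, ← hc, hcn]
    have hn1 : ‖a₁‖ = 1 := by
      refine le_antisymm ha₁ ?_
      have h := mul_le_mul_of_nonneg_left ha₂ (norm_nonneg a₁)
      rw [mul_one, hprod] at h
      exact h
    have hn2 : ‖a₂‖ = 1 := by
      refine le_antisymm ha₂ ?_
      have h := mul_le_mul_of_nonneg_right ha₁ (norm_nonneg a₂)
      rw [one_mul, hprod] at h
      exact h
    exact ⟨hn1, hn2, hd0⟩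
  exact ⟨⟨hfwd, fun h => (hiso h).1⟩, ⟨fun h => hfwd h.1, hiso⟩⟩
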